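/- arXiv:2512.23308 — 2 statements merged into one kernel-verified Lean document; each statement's English description precedes it below -/
import Mathlib

section
/- Let S_1, …, S_{n+1} be exchangeable real-valued random variables with almost surely no ties, and let α ∈ (0,1). Define the conformal p-value P = (#{i ≤ n+1 : S_i ≥ S_{n+1}})/(n+1). Then Pr(P ≤ α) ≤ α; equivalently Pr(P > α) ≥ 1 − α. -/
open MeasureTheory Finset
open scoped ENNReal


namespace ConformalAux

variable {n : ℕ}

/-- Count of indices `i` with `s j ≤ s i`. -/
noncomputable def Fcnt (n : ℕ) (j : Fin (n + 1)) (s : Fin (n + 1) → ℝ) : ℕ :=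
  (Finset.univ.filter (fun i => s j ≤ s i)).card

lemma Fcnt_comp_perm (π : Equiv.Perm (Fin (n + 1))) (j : Fin (n + 1))
    (s : Fin (n + 1) → ℝ) (h : π (Fin.last n) = j) :
    Fcnt n (Fin.last n) (fun i => s (π i)) = Fcnt n j s := by
  unfold Fcnt
  simp only [h]
  apply Finset.card_bij (fun i _ => π i)
  · intro a ha
    simp only [mem_filter, mem_univ, true_and] at ha ⊢
    exact ha
  · intro a _ b _ hab
    exact π.injective hab
  · intro b hb
    refine ⟨π.symm b, ?_, by simp⟩
    simp only [mem_filter, mem_univ, true_and, Equiv.apply_symm_apply] at hb ⊢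
    exact hb

lemma one_le_Fcnt (j : Fin (n + 1)) (s : Fin (n + 1) → ℝ) : 1 ≤ Fcnt n j s := by
  have : j ∈ Finset.univ.filter (fun i => s j ≤ s i) := by simp
  exact Finset.card_pos.mpr ⟨j, this⟩

lemma Fcnt_le (j : Fin (n + 1)) (s : Fin (n + 1) → ℝ) : Fcnt n j s ≤ n + 1 := by
  have := Finset.card_filter_le (Finset.univ : Finset (Fin (n + 1))) (fun i => s j ≤ s i)
  simpa [Fcnt] using this

lemma Fcnt_injective {s : Fin (n + 1) → ℝ} (hs : Function.Injective s) :
    Function.Injective (fun j => Fcnt n j s) := by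
  intro a b hab
  by_contra hne
  have hsne : s a ≠ s b := fun h => hne (hs h)
  wlog hlt : s a < s b generalizing a b
  · exact this hab.symm (Ne.symm hne) hsne.symm (lt_of_le_of_ne (not_lt.mp hlt) hsne.symm)
  -- then Fcnt b < Fcnt a
  have hsub : Finset.univ.filter (fun i => s b ≤ s i) ⊂
      Finset.univ.filter (fun i => s a ≤ s i) := by
    constructor
    · intro i hi
      simp only [mem_filter, mem_univ, true_and] at hi ⊢
      exact hlt.le.trans hi
    · intro hsub'
      have : a ∈ Finset.univ.filter (fun i => s a ≤ s i) := by simp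
      have := hsub' this
      simp only [mem_filter, mem_univ, true_and] at this
      exact absurd this (not_le.mpr hlt)
  have : Fcnt n b s < Fcnt n a s := Finset.card_lt_card hsub
  change Fcnt n a s = Fcnt n b s at hab
  change Fcnt n b s < Fcnt n a s at this
  omega

/-- On tie-free `s`, every rank `k ∈ [1, n+1]` is attained by exactly one `j`. -/
lemma Fcnt_bij {s : Fin (n + 1) → ℝ} (hs : Function.Injective s)
    {k : ℕ} (hk : k ∈ Finset.Icc 1 (n + 1)) : ∃! j, Fcnt n j s = k := by
  have hinj := Fcnt_injective hs
  have hmaps : ∀ j : Fin (n + 1), Fcnt n j s ∈ Finset.Icc 1 (n + 1) := fun j =>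
    Finset.mem_Icc.mpr ⟨one_le_Fcnt j s, Fcnt_le j s⟩
  have himg : (Finset.univ.image (fun j => Fcnt n j s)) = Finset.Icc 1 (n + 1) := by
    apply Finset.eq_of_subset_of_card_le
    · intro x hx
      simp only [Finset.mem_image] at hx
      obtain ⟨j, _, rfl⟩ := hx
      exact hmaps j
    · rw [Finset.card_image_of_injective _ hinj]
      rw [Nat.card_Icc, Finset.card_univ]
      simp
  rw [← himg] at hk
  simp only [Finset.mem_image, Finset.mem_univ, true_and] at hk
  obtain ⟨j, hj⟩ := hk
  exact ⟨j, hj, fun j' hj' => hinj (hj'.trans hj.symm)⟩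

lemma measurable_Fcnt (j : Fin (n + 1)) : Measurable (Fcnt n j) := by
  have : Fcnt n j = fun s => ∑ i : Fin (n + 1), if s j ≤ s i then 1 else 0 := by
    funext s
    rw [Fcnt, Finset.card_filter]
  rw [this]
  apply Finset.measurable_sum
  intro i _
  exact Measurable.ite (measurableSet_le (measurable_pi_apply j) (measurable_pi_apply i))
    measurable_const measurable_const

end ConformalAux


open ConformalAux

/-- Finite-sample validity of the conformal p-value: for exchangeable, a.s. tie-free
scores `S_1, …, S_{n+1}`, the p-value `P = #{i : S_i ≥ S_{n+1}}/(n+1)` satisfies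
`Pr(P ≤ α) ≤ α`, equivalently `Pr(P > α) ≥ 1 - α`. -/
theorem conformal_pvalue_valid {Ω : Type*} [MeasurableSpace Ω]
    (P : Measure Ω) [IsProbabilityMeasure P] (n : ℕ)
    (S : Fin (n + 1) → Ω → ℝ) (hS : ∀ i, Measurable (S i))
    (hexch : ∀ π : Equiv.Perm (Fin (n + 1)),
      Measure.map (fun ω i => S (π i) ω) P = Measure.map (fun ω i => S i ω) P)
    (hties : ∀ i j, i ≠ j → P {ω | S i ω = S j ω} = 0)
    (α : ℝ) (hα : α ∈ Set.Ioo (0 : ℝ) 1) :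
    P {ω | ((Finset.univ.filter
          (fun i : Fin (n + 1) => S (Fin.last n) ω ≤ S i ω)).card : ℝ) / (n + 1) ≤ α}
        ≤ ENNReal.ofReal α ∧
      ENNReal.ofReal (1 - α)
        ≤ P {ω | α < ((Finset.univ.filter
            (fun i : Fin (n + 1) => S (Fin.last n) ω ≤ S i ω)).card : ℝ) / (n + 1)} := by
  obtain ⟨hα0, hα1⟩ := hα
  have hset : ∀ ω, (Finset.univ.filter
      (fun i : Fin (n + 1) => S (Fin.last n) ω ≤ S i ω)).card
      = Fcnt n (Fin.last n) (fun i => S i ω) := fun ω => rfl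
  simp only [hset]
  have hVmeas : Measurable (fun ω i => S i ω) := measurable_pi_lambda _ hS
  -- the rank events
  set E : Fin (n + 1) → ℕ → Set Ω :=
    fun j k => {ω | Fcnt n j (fun i => S i ω) = k} with hE
  have hEmeas : ∀ j k, MeasurableSet (E j k) := fun j k =>
    ((measurable_Fcnt j).comp hVmeas) (measurableSet_singleton k)
  -- exchangeability transfers rank events between indices
  have hEk : ∀ j k, P (E j k) = P (E (Fin.last n) k) := by
    intro j k
    have hA : MeasurableSet {s : Fin (n + 1) → ℝ | Fcnt n (Fin.last n) s = k} :=
      (measurable_Fcnt _) (measurableSet_singleton k)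
    set π := Equiv.swap (Fin.last n) j with hπ
    have hπlast : π (Fin.last n) = j := Equiv.swap_apply_left _ _
    have hmap := hexch π
    have hπmeas : Measurable (fun ω i => S (π i) ω) :=
      measurable_pi_lambda _ (fun i => hS (π i))
    have h1 := Measure.map_apply (μ := P) hπmeas hA
    have h2 := Measure.map_apply (μ := P) hVmeas hA
    rw [hmap, h2] at h1
    have hpre1 : (fun ω i => S (π i) ω) ⁻¹'
        {s : Fin (n + 1) → ℝ | Fcnt n (Fin.last n) s = k} = E j k := by
      ext ω
      simp only [Set.mem_preimage, Set.mem_setOf_eq, hE]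
      rw [Fcnt_comp_perm π j (fun i => S i ω) hπlast]
    have hpre2 : (fun ω i => S i ω) ⁻¹'
        {s : Fin (n + 1) → ℝ | Fcnt n (Fin.last n) s = k} = E (Fin.last n) k := rfl
    rw [hpre1, hpre2] at h1
    exact h1.symm
  -- the tie-free event
  set T : Set Ω := ⋂ i, ⋂ j, ⋂ (_ : i ≠ j), {ω | S i ω = S j ω}ᶜ with hT
  have hTmeas : MeasurableSet T := by
    refine MeasurableSet.iInter fun i => MeasurableSet.iInter fun j =>
      MeasurableSet.iInter fun _ => ?_
    exact (measurableSet_eq_fun (hS i) (hS j)).compl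
  have hTc : P Tᶜ = 0 := by
    rw [hT]
    simp only [Set.compl_iInter, compl_compl]
    exact measure_iUnion_null fun i => measure_iUnion_null fun j =>
      measure_iUnion_null fun h => hties i j h
  have hTinj : ∀ ω ∈ T, Function.Injective (fun i => S i ω) := by
    intro ω hω i j hij
    by_contra hne
    simp only [hT, Set.mem_iInter, Set.mem_compl_iff, Set.mem_setOf_eq] at hω
    exact hω i j hne hij
  have hinterT : ∀ A : Set Ω, P (A ∩ T) = P A := by
    intro A
    refine le_antisymm (measure_mono Set.inter_subset_left) ?_
    have hdiff : A \ T ⊆ Tᶜ := fun ω hω => hω.2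
    calc P A ≤ P (A ∩ T) + P (A \ T) := measure_le_inter_add_diff P A T
    _ ≤ P (A ∩ T) + P Tᶜ := add_le_add le_rfl (measure_mono hdiff)
    _ = P (A ∩ T) := by rw [hTc, add_zero]
  have hPT : P T = 1 := by
    have := hinterT Set.univ
    rwa [Set.univ_inter, measure_univ] at this
  -- each rank event has measure 1/(n+1)
  have hEone : ∀ k ∈ Finset.Icc 1 (n + 1), P (E (Fin.last n) k) = ((n : ℝ≥0∞) + 1)⁻¹ := by
    intro k hk
    have hdisj : ((Finset.univ : Finset (Fin (n + 1))) : Set (Fin (n + 1))).PairwiseDisjoint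
        (fun j => E j k ∩ T) := by
      intro a _ b _ hab
      refine Set.disjoint_left.mpr fun ω hωa hωb => ?_
      have hinj := Fcnt_injective (hTinj ω hωa.2)
      exact hab (hinj (hωa.1.trans hωb.1.symm))
    have hcover : (⋃ j ∈ (Finset.univ : Finset (Fin (n + 1))), (E j k ∩ T)) = T := by
      ext ω
      simp only [Set.mem_iUnion, Finset.mem_univ, exists_prop, true_and, Set.mem_inter_iff]
      constructor
      · rintro ⟨j, _, hωT⟩; exact hωT
      · intro hωT
        obtain ⟨j, hj, -⟩ := Fcnt_bij (hTinj ω hωT) hk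
        exact ⟨j, hj, hωT⟩
    have hsum := measure_biUnion_finset (μ := P) hdisj (fun j _ => (hEmeas j k).inter hTmeas)
    rw [hcover, hPT] at hsum
    have heach : ∀ j : Fin (n + 1), P (E j k ∩ T) = P (E (Fin.last n) k) := fun j =>
      (hinterT (E j k)).trans (hEk j k)
    rw [Finset.sum_congr rfl (fun j _ => heach j), Finset.sum_const, Finset.card_univ,
      Fintype.card_fin, nsmul_eq_mul] at hsum
    have hne0 : ((n : ℝ≥0∞) + 1) ≠ 0 := by simp
    have hnetop : ((n : ℝ≥0∞) + 1) ≠ ⊤ := by simp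
    have : ((n : ℝ≥0∞) + 1)⁻¹ * (((n + 1 : ℕ) : ℝ≥0∞) * P (E (Fin.last n) k))
        = ((n : ℝ≥0∞) + 1)⁻¹ * 1 := by rw [hsum]
    rw [Nat.cast_add, Nat.cast_one, ← mul_assoc, ENNReal.inv_mul_cancel hne0 hnetop,
      one_mul, mul_one] at this
    exact this
  -- floor bound
  set m := ⌊α * (n + 1)⌋₊ with hm
  have hnpos : (0 : ℝ) < (n : ℝ) + 1 := by positivity
  have hm_le : (m : ℝ) ≤ α * (n + 1) := Nat.floor_le (by positivity)
  have hm_lt : m ≤ n := by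
    have hlt : α * ((n : ℝ) + 1) < (n : ℝ) + 1 := by nlinarith
    have h2 : m < n + 1 := by
      rw [hm]
      refine (Nat.floor_lt (by positivity : (0:ℝ) ≤ α * ((n:ℝ) + 1))).mpr ?_
      push_cast
      linarith
    omega
  -- the main event is a union of rank events
  have hBsub : {ω | (Fcnt n (Fin.last n) (fun i => S i ω) : ℝ) / (n + 1) ≤ α}
      ⊆ ⋃ k ∈ Finset.Icc 1 m, E (Fin.last n) k := by
    intro ω hω
    simp only [Set.mem_setOf_eq] at hω
    set N := Fcnt n (Fin.last n) (fun i => S i ω) with hN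
    have hN1 : 1 ≤ N := one_le_Fcnt _ _
    have hNle : (N : ℝ) ≤ α * (n + 1) := by
      rw [div_le_iff₀ hnpos] at hω
      exact hω
    have hNm : N ≤ m := Nat.le_floor hNle
    simp only [Set.mem_iUnion, exists_prop]
    exact ⟨N, Finset.mem_Icc.mpr ⟨hN1, hNm⟩, rfl⟩
  have hmain : P {ω | (Fcnt n (Fin.last n) (fun i => S i ω) : ℝ) / (n + 1) ≤ α}
      ≤ ENNReal.ofReal α := by
    calc P {ω | (Fcnt n (Fin.last n) (fun i => S i ω) : ℝ) / (n + 1) ≤ α}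
        ≤ P (⋃ k ∈ Finset.Icc 1 m, E (Fin.last n) k) := measure_mono hBsub
      _ ≤ ∑ k ∈ Finset.Icc 1 m, P (E (Fin.last n) k) := measure_biUnion_finset_le _ _
      _ = ∑ k ∈ Finset.Icc 1 m, ((n : ℝ≥0∞) + 1)⁻¹ := by
          refine Finset.sum_congr rfl fun k hk => ?_
          rw [Finset.mem_Icc] at hk
          exact hEone k (Finset.mem_Icc.mpr ⟨hk.1, by omega⟩)
      _ = (m : ℝ≥0∞) * ((n : ℝ≥0∞) + 1)⁻¹ := by
          rw [Finset.sum_const, Nat.card_Icc, nsmul_eq_mul]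
          norm_num
      _ ≤ ENNReal.ofReal α := by
          have h1 : (m : ℝ≥0∞) = ENNReal.ofReal (m : ℝ) := by
            rw [ENNReal.ofReal_natCast]
          have h2 : ((n : ℝ≥0∞) + 1)⁻¹ = ENNReal.ofReal (((n : ℝ) + 1)⁻¹) := by
            rw [ENNReal.ofReal_inv_of_pos hnpos]
            congr 1
            rw [← ENNReal.ofReal_natCast n, ← ENNReal.ofReal_one, ← ENNReal.ofReal_add
              (by positivity) zero_le_one]
          rw [h1, h2, ← ENNReal.ofReal_mul (by positivity)]
          apply ENNReal.ofReal_le_ofReal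
          rw [mul_inv_le_iff₀ hnpos]  -- maybe wrong name
          linarith
  have hBmeas : MeasurableSet
      {ω | (Fcnt n (Fin.last n) (fun i => S i ω) : ℝ) / (n + 1) ≤ α} := by
    have hf : Measurable (fun ω => (Fcnt n (Fin.last n) (fun i => S i ω) : ℝ) / (n + 1)) := by
      apply Measurable.div_const
      exact Measurable.comp measurable_from_top (((measurable_Fcnt (Fin.last n))).comp hVmeas)
    exact measurableSet_le hf measurable_const
  refine ⟨hmain, ?_⟩
  have hcompl : {ω | α < (Fcnt n (Fin.last n) (fun i => S i ω) : ℝ) / (n + 1)}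
      = {ω | (Fcnt n (Fin.last n) (fun i => S i ω) : ℝ) / (n + 1) ≤ α}ᶜ := by
    ext ω; simp [not_le]
  rw [hcompl, prob_compl_eq_one_sub hBmeas]
  have hsub : ENNReal.ofReal (1 - α) = 1 - ENNReal.ofReal α := by
    rw [ENNReal.ofReal_sub _ (le_of_lt hα0), ENNReal.ofReal_one]
  calc ENNReal.ofReal (1 - α) = 1 - ENNReal.ofReal α := hsub
    _ ≤ 1 - P {ω | (Fcnt n (Fin.last n) (fun i => S i ω) : ℝ) / (n + 1) ≤ α} :=
        tsub_le_tsub_left hmain 1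
end

section
/- Let σ : [0,1] → ℝ be given by σ(x) = 1 + x and let Z be a standard normal random variable. For a Borel probability measure P on [0,1], define F_P(r) = ∫ Φ(r/σ(x)) dP(x) for r > 0, where Φ is the standard normal CDF. If P_1 and P_2 are two distinct Borel probability measures on [0,1], and F_{P_1}(r) = F_{P_2}(r) for all r > 0, then P_1 = P_2. Consequently, if P_1 ≠ P_2 then there exists r > 0 with F_{P_1}(r) ≠ F_{P_2}(r). -/
open MeasureTheory ProbabilityTheory Real NNReal ENNReal

/-- The standard normal CDF. -/
noncomputable def stdNormalCDF (r : ℝ) : ℝ :=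
  ((gaussianReal 0 1) (Set.Iic r)).toReal

/-- the upper tail -/
noncomputable def stdTail (r : ℝ) : ℝ := 1 - stdNormalCDF r

lemma stdNormalCDF_mono : Monotone stdNormalCDF := by
  intro u v huv
  exact ENNReal.toReal_mono (measure_ne_top _ _) (measure_mono (Set.Iic_subset_Iic.2 huv))

lemma measurable_stdNormalCDF : Measurable stdNormalCDF :=
  stdNormalCDF_mono.measurable

lemma stdNormalCDF_nonneg (r : ℝ) : 0 ≤ stdNormalCDF r := ENNReal.toReal_nonneg

lemma stdNormalCDF_le_one (r : ℝ) : stdNormalCDF r ≤ 1 := by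
  have := prob_le_one (μ := gaussianReal 0 1) (s := Set.Iic r)
  simpa [stdNormalCDF] using ENNReal.toReal_mono (by simp) this

lemma stdTail_eq (r : ℝ) : stdTail r = ((gaussianReal 0 1) (Set.Ioi r)).toReal := by
  have h : (gaussianReal 0 1) (Set.Iic r) + (gaussianReal 0 1) (Set.Ioi r) = 1 := by
    rw [← measure_union (Set.Iic_disjoint_Ioi le_rfl) measurableSet_Ioi, Set.Iic_union_Ioi,
      measure_univ]
  have h1 : (gaussianReal 0 1) (Set.Iic r) ≠ ⊤ := measure_ne_top _ _
  have h2 : (gaussianReal 0 1) (Set.Ioi r) ≠ ⊤ := measure_ne_top _ _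
  have := congrArg ENNReal.toReal h
  rw [ENNReal.toReal_add h1 h2] at this
  simp only [ENNReal.toReal_one] at this
  simp [stdTail, stdNormalCDF]
  linarith

lemma stdTail_nonneg (r : ℝ) : 0 ≤ stdTail r := by rw [stdTail_eq]; positivity

lemma stdTail_pos (r : ℝ) : 0 < stdTail r := by
  rw [stdTail_eq]
  have hne : (1 : ℝ≥0) ≠ 0 := one_ne_zero
  rw [gaussianReal_apply_eq_integral 0 hne]
  refine ENNReal.toReal_pos (by
    simp only [ne_eq, ENNReal.ofReal_eq_zero, not_le]
    refine (setIntegral_pos_iff_support_of_nonneg_ae ?_ ?_).2 ?_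
    · exact Filter.Eventually.of_forall fun x => gaussianPDFReal_nonneg 0 1 x
    · exact (integrable_gaussianPDFReal 0 1).integrableOn
    · have : (Function.support (gaussianPDFReal 0 1)) = Set.univ := by
        ext x; simp [Function.support, (gaussianPDFReal_pos 0 1 x hne).ne']
      rw [this, Set.univ_inter]
      simpa using (isOpen_Ioi (a := r)).measure_pos volume Set.nonempty_Ioi
      ) (by simp [ENNReal.ofReal_ne_top])


lemma stdTail_integral (r : ℝ) :
    stdTail r = ∫ x in Set.Ioi r, gaussianPDFReal 0 1 x := by
  rw [stdTail_eq, gaussianReal_apply_eq_integral 0 one_ne_zero,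
    ENNReal.toReal_ofReal (setIntegral_nonneg measurableSet_Ioi
      fun x _ => gaussianPDFReal_nonneg 0 1 x)]

lemma stdTail_le {r : ℝ} (hr : 0 ≤ r) :
    stdTail r ≤ Real.sqrt 2 * Real.exp (-r^2/4) := by
  rw [stdTail_integral]
  have hb : (0:ℝ) < 1/4 := by norm_num
  have hπ : (0:ℝ) < π := Real.pi_pos
  have hint : Integrable (fun x : ℝ =>
      (Real.sqrt (2*π))⁻¹ * (Real.exp (-r^2/4) * Real.exp (-(1/4) * x^2))) :=
    ((integrable_exp_neg_mul_sq hb).const_mul _).const_mul _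
  have h1 : ∫ x in Set.Ioi r, gaussianPDFReal 0 1 x
      ≤ ∫ x in Set.Ioi r,
          (Real.sqrt (2*π))⁻¹ * (Real.exp (-r^2/4) * Real.exp (-(1/4)*x^2)) := by
    refine setIntegral_mono_on (integrable_gaussianPDFReal 0 1).integrableOn
      hint.integrableOn measurableSet_Ioi ?_
    intro x hx
    simp only [Set.mem_Ioi] at hx
    rw [gaussianPDFReal]
    push_cast
    rw [mul_one, sub_zero, ← Real.exp_add]
    refine mul_le_mul_of_nonneg_left ?_ (by positivity)
    refine Real.exp_le_exp.2 ?_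
    nlinarith [sq_nonneg (x - r), sq_nonneg (x + r)]
  have h2 : ∫ x in Set.Ioi r,
        (Real.sqrt (2*π))⁻¹ * (Real.exp (-r^2/4) * Real.exp (-(1/4)*x^2))
      ≤ ∫ x : ℝ, (Real.sqrt (2*π))⁻¹ * (Real.exp (-r^2/4) * Real.exp (-(1/4)*x^2)) := by
    refine setIntegral_le_integral hint (Filter.Eventually.of_forall fun x => ?_)
    positivity
  have h3 : ∫ x : ℝ, (Real.sqrt (2*π))⁻¹ * (Real.exp (-r^2/4) * Real.exp (-(1/4)*x^2))
      = Real.sqrt 2 * Real.exp (-r^2/4) := by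
    rw [integral_const_mul, integral_const_mul, integral_gaussian]
    have h4 : Real.sqrt (π / (1/4)) = 2 * Real.sqrt π := by
      rw [show π / (1/4) = 4 * π by ring, Real.sqrt_mul (by norm_num),
        show Real.sqrt 4 = 2 by
          rw [show (4:ℝ) = 2^2 by norm_num, Real.sqrt_sq (by norm_num)]]
    rw [h4, Real.sqrt_mul (by norm_num : (0:ℝ) ≤ 2)]
    have hs2 : (0:ℝ) < Real.sqrt 2 := Real.sqrt_pos.2 (by norm_num)
    have hsπ : (0:ℝ) < Real.sqrt π := Real.sqrt_pos.2 hπ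
    have h22 : Real.sqrt 2 * Real.sqrt 2 = 2 := Real.mul_self_sqrt (by norm_num)
    field_simp
    linear_combination (-1 : ℝ) * h22
  linarith

lemma measurable_stdTail : Measurable stdTail :=
  measurable_const.sub measurable_stdNormalCDF

lemma integrableOn_pow_mul_stdTail (k : ℕ) {t : ℝ} (ht : 0 < t) :
    IntegrableOn (fun r : ℝ => r ^ k * stdTail (r * t)) (Set.Ioi 0) := by
  have hb : (0:ℝ) < t^2/4 := by positivity
  have hD : IntegrableOn (fun x : ℝ => x ^ (k:ℝ) * Real.exp (-(t^2/4) * x^2))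
      (Set.Ioi 0) := (integrable_rpow_mul_exp_neg_mul_sq hb
        (lt_of_lt_of_le neg_one_lt_zero (Nat.cast_nonneg k))).integrableOn
  have hD' : IntegrableOn (fun x : ℝ => Real.sqrt 2 * (x ^ k * Real.exp (-(t^2/4) * x^2)))
      (Set.Ioi 0) := by
    refine ((hD.congr_fun (fun x hx => ?_) measurableSet_Ioi).const_mul _)
    rw [Real.rpow_natCast]
  refine Integrable.mono' hD' ?_ ?_
  · refine Measurable.aestronglyMeasurable ?_
    exact (measurable_id.pow_const k).mul (measurable_stdTail.comp (measurable_id.mul_const t))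
  · rw [ae_restrict_iff' measurableSet_Ioi]
    refine Filter.Eventually.of_forall fun r hr => ?_
    simp only [Set.mem_Ioi] at hr
    have h0 : 0 ≤ r ^ k * stdTail (r * t) :=
      mul_nonneg (pow_nonneg hr.le _) (stdTail_nonneg _)
    rw [Real.norm_eq_abs, abs_of_nonneg h0]
    have := stdTail_le (mul_nonneg hr.le ht.le)
    calc r ^ k * stdTail (r * t) ≤ r ^ k * (Real.sqrt 2 * Real.exp (-(r*t)^2/4)) :=
          mul_le_mul_of_nonneg_left this (pow_nonneg hr.le _)
      _ = Real.sqrt 2 * (r ^ k * Real.exp (-(t^2/4) * r^2)) := by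
          rw [show (-(r*t)^2/4 : ℝ) = -(t^2/4) * r^2 by ring]; ring

noncomputable def Ck (k : ℕ) : ℝ := ∫ r in Set.Ioi 0, r ^ k * stdTail r

lemma integrableOn_pow_mul_stdTail' (k : ℕ) :
    IntegrableOn (fun r : ℝ => r ^ k * stdTail r) (Set.Ioi 0) := by
  have := integrableOn_pow_mul_stdTail k one_pos
  simpa using this

lemma Ck_pos (k : ℕ) : 0 < Ck k := by
  rw [Ck]
  refine (setIntegral_pos_iff_support_of_nonneg_ae ?_ (integrableOn_pow_mul_stdTail' k)).2 ?_
  · filter_upwards [ae_restrict_mem measurableSet_Ioi] with r hr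
    exact mul_nonneg (pow_nonneg (le_of_lt hr) _) (stdTail_nonneg _)
  · have hsub : Set.Ioi (0:ℝ) ⊆ Function.support (fun r : ℝ => r ^ k * stdTail r) ∩ Set.Ioi 0 := by
      intro r hr
      refine ⟨?_, hr⟩
      simp only [Function.mem_support]
      exact (mul_pos (pow_pos hr _) (stdTail_pos _)).ne'
    calc (0:ℝ≥0∞) < volume (Set.Ioi (0:ℝ)) := by simp
      _ ≤ _ := measure_mono hsub

lemma integral_pow_mul_stdTail_comp {t : ℝ} (ht : 0 < t) (k : ℕ) :
    ∫ r in Set.Ioi 0, r ^ k * stdTail (r * t) = t⁻¹ ^ (k+1) * Ck k := by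
  have h := integral_comp_mul_left_Ioi (fun u => u ^ k * stdTail u) 0 ht
  simp only [mul_zero] at h
  have h2 : ∫ r in Set.Ioi 0, r ^ k * stdTail (r * t)
      = ∫ r in Set.Ioi 0, t⁻¹ ^ k * ((t * r) ^ k * stdTail (t * r)) := by
    refine setIntegral_congr_fun measurableSet_Ioi fun r _ => ?_
    rw [mul_comm r t, mul_pow, ← mul_assoc, ← mul_assoc, ← mul_pow,
      inv_mul_cancel₀ ht.ne', one_pow, one_mul]
  rw [h2, integral_const_mul, h, smul_eq_mul, Ck, pow_succ]
  ring

namespace ScaleMixAux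
set_option maxHeartbeats 1000000

abbrev S := Set.Icc (0:ℝ) 1

lemma one_add_pos (x : S) : (0:ℝ) < 1 + (x:ℝ) := by
  have := x.2.1; linarith

lemma one_add_le_two (x : S) : (1:ℝ) + (x:ℝ) ≤ 2 := by
  have := x.2.2; linarith

lemma measurable_tau : Measurable (fun x : S => (1 + (x:ℝ))⁻¹) :=
  (measurable_const.add measurable_subtype_coe).inv

lemma fubini_key (P : Measure S) [IsProbabilityMeasure P] (k : ℕ) :
    ∫ r in Set.Ioi (0:ℝ), r ^ k * (∫ x, stdTail (r * (1 + (x:ℝ))⁻¹) ∂P)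
      = Ck k * ∫ x, (1 + (x:ℝ)) ^ (k+1) ∂P := by
  have htpos : ∀ x : S, 0 < (1 + (x:ℝ))⁻¹ := fun x => inv_pos.2 (one_add_pos x)
  have hmeas : AEStronglyMeasurable
      (Function.uncurry fun (x : S) (r : ℝ) => r ^ k * stdTail (r * (1 + (x:ℝ))⁻¹))
      (P.prod (volume.restrict (Set.Ioi 0))) := by
    apply Measurable.aestronglyMeasurable
    show Measurable fun p : S × ℝ => p.2 ^ k * stdTail (p.2 * (1 + (p.1:ℝ))⁻¹)
    exact (measurable_snd.pow_const k).mul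
      (measurable_stdTail.comp (measurable_snd.mul (measurable_tau.comp measurable_fst)))
  have hinner : ∀ x : S, (∫ r in Set.Ioi (0:ℝ), r ^ k * stdTail (r * (1 + (x:ℝ))⁻¹))
      = (1 + (x:ℝ)) ^ (k+1) * Ck k := fun x => by
    rw [integral_pow_mul_stdTail_comp (htpos x) k, inv_inv]
  have hint : Integrable
      (Function.uncurry fun (x : S) (r : ℝ) => r ^ k * stdTail (r * (1 + (x:ℝ))⁻¹))
      (P.prod (volume.restrict (Set.Ioi 0))) := by
    rw [integrable_prod_iff hmeas]
    constructor
    · refine Filter.Eventually.of_forall fun x => ?_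
      simpa only [Function.uncurry_apply_pair, IntegrableOn] using integrableOn_pow_mul_stdTail k (htpos x)
    · have heq : ∀ x : S, (∫ r in Set.Ioi (0:ℝ), ‖r ^ k * stdTail (r * (1 + (x:ℝ))⁻¹)‖)
          = (1 + (x:ℝ)) ^ (k+1) * Ck k := by
        intro x
        rw [← hinner x]
        refine integral_congr_ae ?_
        filter_upwards [ae_restrict_mem measurableSet_Ioi] with r hr
        rw [Set.mem_Ioi] at hr
        exact norm_of_nonneg (mul_nonneg (pow_nonneg hr.le _) (stdTail_nonneg _))
      refine (integrable_const ((2:ℝ) ^ (k+1) * Ck k)).mono'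
        (hmeas.norm.integral_prod_right') (Filter.Eventually.of_forall fun x => ?_)
      simp only [Function.uncurry_apply_pair]
      rw [heq x, norm_of_nonneg (mul_nonneg (pow_nonneg (one_add_pos x).le _) (Ck_pos k).le)]
      exact mul_le_mul_of_nonneg_right
        (pow_le_pow_left₀ (one_add_pos x).le (one_add_le_two x) _) (Ck_pos k).le
  have hswap := MeasureTheory.integral_integral_swap hint
  calc ∫ r in Set.Ioi (0:ℝ), r ^ k * (∫ x, stdTail (r * (1 + (x:ℝ))⁻¹) ∂P)
      = ∫ r in Set.Ioi (0:ℝ), ∫ x, r ^ k * stdTail (r * (1 + (x:ℝ))⁻¹) ∂P := by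
        refine setIntegral_congr_fun measurableSet_Ioi fun r _ => ?_
        rw [integral_const_mul]
    _ = ∫ x, (∫ r in Set.Ioi (0:ℝ), r ^ k * stdTail (r * (1 + (x:ℝ))⁻¹)) ∂P := hswap.symm
    _ = ∫ x, Ck k * ((1 + (x:ℝ)) ^ (k+1)) ∂P := by
        refine integral_congr_ae (Filter.Eventually.of_forall fun x => ?_)
        dsimp only
        rw [hinner x]; ring
    _ = Ck k * ∫ x, (1 + (x:ℝ)) ^ (k+1) ∂P := integral_const_mul _ _

lemma integrable_of_bdd (P : Measure S) [IsProbabilityMeasure P] {f : S → ℝ}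
    (hm : AEStronglyMeasurable f P) {C : ℝ} (h : ∀ x, ‖f x‖ ≤ C) : Integrable f P :=
  (integrable_const C).mono' hm (Filter.Eventually.of_forall h)

lemma integrable_cont (P : Measure S) [IsProbabilityMeasure P] (f : C(S, ℝ)) :
    Integrable (fun x => f x) P :=
  integrable_of_bdd P f.continuous.measurable.aestronglyMeasurable
    (fun x => f.norm_coe_le_norm x)

lemma integrable_cdf (P : Measure S) [IsProbabilityMeasure P] (r : ℝ) :
    Integrable (fun x : S => stdNormalCDF (r * (1 + (x:ℝ))⁻¹)) P := by
  refine integrable_of_bdd P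
    (measurable_stdNormalCDF.comp (measurable_const.mul measurable_tau)).aestronglyMeasurable
    (C := 1) fun x => ?_
  rw [Real.norm_eq_abs, abs_of_nonneg (stdNormalCDF_nonneg _)]
  exact stdNormalCDF_le_one _

lemma tail_integral (P : Measure S) [IsProbabilityMeasure P] (r : ℝ) :
    (∫ x, stdTail (r * (1 + (x:ℝ))⁻¹) ∂P)
      = 1 - ∫ x, stdNormalCDF (r * (1 + (x:ℝ))⁻¹) ∂P := by
  simp only [stdTail]
  rw [integral_sub (integrable_const 1) (integrable_cdf P r), integral_const]
  simp

lemma moments_eq (P₁ P₂ : Measure S) [IsProbabilityMeasure P₁] [IsProbabilityMeasure P₂]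
    (h : ∀ r : ℝ, 0 < r →
      (∫ x, stdNormalCDF (r / (1 + (x:ℝ))) ∂P₁) = ∫ x, stdNormalCDF (r / (1 + (x:ℝ))) ∂P₂)
    (n : ℕ) :
    (∫ x, (1 + (x:ℝ)) ^ n ∂P₁) = ∫ x, (1 + (x:ℝ)) ^ n ∂P₂ := by
  cases n with
  | zero => simp
  | succ k =>
    have h' : ∀ r : ℝ, 0 < r → (∫ x, stdTail (r * (1 + (x:ℝ))⁻¹) ∂P₁)
        = ∫ x, stdTail (r * (1 + (x:ℝ))⁻¹) ∂P₂ := by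
      intro r hr
      rw [tail_integral, tail_integral]
      have := h r hr
      simp only [div_eq_mul_inv] at this
      rw [this]
    have key : Ck k * (∫ x, (1 + (x:ℝ)) ^ (k+1) ∂P₁)
        = Ck k * ∫ x, (1 + (x:ℝ)) ^ (k+1) ∂P₂ := by
      rw [← fubini_key P₁ k, ← fubini_key P₂ k]
      refine setIntegral_congr_fun measurableSet_Ioi fun r hr => ?_
      rw [Set.mem_Ioi] at hr
      rw [h' r hr]
    exact mul_left_cancel₀ (Ck_pos k).ne' key

lemma integral_cont_eq (P₁ P₂ : Measure S) [IsProbabilityMeasure P₁] [IsProbabilityMeasure P₂]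
    (h : ∀ r : ℝ, 0 < r →
      (∫ x, stdNormalCDF (r / (1 + (x:ℝ))) ∂P₁) = ∫ x, stdNormalCDF (r / (1 + (x:ℝ))) ∂P₂)
    (f : C(S, ℝ)) :
    (∫ x, f x ∂P₁) = ∫ x, f x ∂P₂ := by
  have hpoly : ∀ q : Polynomial ℝ, (∫ x, q.eval (1 + (x:ℝ)) ∂P₁) = ∫ x, q.eval (1 + (x:ℝ)) ∂P₂ := by
    intro q
    induction q using Polynomial.induction_on' with
    | add p q hp hq =>
      have c1 : Continuous fun x : S => Polynomial.eval (1 + (x:ℝ)) p :=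
        p.continuous.comp (continuous_const.add continuous_subtype_val)
      have c2 : Continuous fun x : S => Polynomial.eval (1 + (x:ℝ)) q :=
        q.continuous.comp (continuous_const.add continuous_subtype_val)
      have i1 : Integrable (fun x : S => Polynomial.eval (1 + (x:ℝ)) p) P₁ :=
        integrable_cont P₁ ⟨_, c1⟩
      have i2 : Integrable (fun x : S => Polynomial.eval (1 + (x:ℝ)) q) P₁ :=
        integrable_cont P₁ ⟨_, c2⟩
      have i3 : Integrable (fun x : S => Polynomial.eval (1 + (x:ℝ)) p) P₂ :=
        integrable_cont P₂ ⟨_, c1⟩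
      have i4 : Integrable (fun x : S => Polynomial.eval (1 + (x:ℝ)) q) P₂ :=
        integrable_cont P₂ ⟨_, c2⟩
      simp only [Polynomial.eval_add]
      rw [integral_add i1 i2, integral_add i3 i4, hp, hq]
    | monomial n a =>
      simp only [Polynomial.eval_monomial]
      rw [integral_const_mul, integral_const_mul, moments_eq P₁ P₂ h n]
  -- the set of continuous functions whose integrals agree
  set A : Set C(S, ℝ) := {g | (∫ x, g x ∂P₁) = ∫ x, g x ∂P₂} with hA
  have hclosed : IsClosed A := by
    have hc : ∀ (P : Measure S) (_ : IsProbabilityMeasure P),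
        Continuous fun g : C(S, ℝ) => ∫ x, g x ∂P := by
      intro P hP
      refine Metric.continuous_iff.2 fun g ε hε => ⟨ε, hε, fun g' hd => ?_⟩
      rw [Real.dist_eq, ← Real.norm_eq_abs,
        ← integral_sub (integrable_cont P g') (integrable_cont P g)]
      calc ‖∫ x, (g' x - g x) ∂P‖ ≤ ‖g' - g‖ * (P Set.univ).toReal := by
            refine norm_integral_le_of_norm_le_const (Filter.Eventually.of_forall fun x => ?_)
            calc ‖g' x - g x‖ = ‖(g' - g) x‖ := by simp
              _ ≤ ‖g' - g‖ := (g' - g).norm_coe_le_norm x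
        _ = dist g' g := by simp [dist_eq_norm]
        _ < ε := hd
    exact isClosed_eq (hc P₁ inferInstance) (hc P₂ inferInstance)
  have hsub : (polynomialFunctions (Set.Icc (0:ℝ) 1) : Set C(S, ℝ)) ⊆ A := by
    intro g hg
    rw [polynomialFunctions_coe] at hg
    obtain ⟨p, rfl⟩ := hg
    show (∫ x, (p.toContinuousMapOn _) x ∂P₁) = ∫ x, (p.toContinuousMapOn _) x ∂P₂
    have : ∀ x : S, (p.toContinuousMapOn (Set.Icc (0:ℝ) 1)) x
        = (p.comp (Polynomial.X - Polynomial.C 1)).eval (1 + (x:ℝ)) := by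
      intro x
      simp [Polynomial.toContinuousMapOn, Polynomial.toContinuousMap, Polynomial.eval_comp]
    simp only [this]
    exact hpoly _
  have htop : f ∈ closure (polynomialFunctions (Set.Icc (0:ℝ) 1) : Set C(S, ℝ)) := by
    have := polynomialFunctions_closure_eq_top 0 1
    have hmem : f ∈ (polynomialFunctions (Set.Icc (0:ℝ) 1)).topologicalClosure := by
      rw [this]; trivial
    exact hmem
  exact closure_minimal hsub hclosed htop

lemma measure_eq (P₁ P₂ : Measure S) [IsProbabilityMeasure P₁] [IsProbabilityMeasure P₂]
    (h : ∀ f : C(S, ℝ), (∫ x, f x ∂P₁) = ∫ x, f x ∂P₂) : P₁ = P₂ := by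
  refine ext_of_forall_lintegral_eq_of_IsFiniteMeasure fun f => ?_
  have hc : Continuous fun x : S => ((f x : ℝ)) := NNReal.continuous_coe.comp f.continuous
  have h1 : Integrable (fun x : S => ((f x : ℝ))) P₁ := integrable_cont P₁ ⟨_, hc⟩
  have h2 : Integrable (fun x : S => ((f x : ℝ))) P₂ := integrable_cont P₂ ⟨_, hc⟩
  rw [lintegral_coe_eq_integral _ h1, lintegral_coe_eq_integral _ h2]
  exact congrArg ENNReal.ofReal (h ⟨_, hc⟩)

end ScaleMixAux

/-- Injectivity of the heteroskedastic scale mixture: with `σ(x) = 1 + x` on `[0,1]`,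
the map `P ↦ F_P`, `F_P(r) = ∫ Φ(r/σ(x)) dP(x)`, is injective on Borel probability
measures on `[0,1]`; consequently distinct mixing laws give different mixture CDFs. -/
theorem scale_mixture_injective
    (P₁ P₂ : Measure (Set.Icc (0 : ℝ) 1))
    [IsProbabilityMeasure P₁] [IsProbabilityMeasure P₂] :
    ((∀ r : ℝ, 0 < r →
        (∫ x, stdNormalCDF (r / (1 + (x : ℝ))) ∂P₁)
          = ∫ x, stdNormalCDF (r / (1 + (x : ℝ))) ∂P₂) → P₁ = P₂) ∧
      (P₁ ≠ P₂ → ∃ r : ℝ, 0 < r ∧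
        (∫ x, stdNormalCDF (r / (1 + (x : ℝ))) ∂P₁)
          ≠ ∫ x, stdNormalCDF (r / (1 + (x : ℝ))) ∂P₂) := by
  constructor
  · intro h
    exact ScaleMixAux.measure_eq P₁ P₂ (ScaleMixAux.integral_cont_eq P₁ P₂ h)
  · intro hne
    by_contra hc
    push_neg at hc
    exact hne (ScaleMixAux.measure_eq P₁ P₂
      (ScaleMixAux.integral_cont_eq P₁ P₂ fun r hr => hc r hr))
end
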